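/- Let λ be an F-invariant probability measure on ℝ^{2p} and π a probability measure. If λ = 2^{-p} Σ_{f ∈ F} π ∘ f⁻¹, then π is absolutely continuous with respect to λ with a density q satisfying Σ_{f ∈ F} q(f(x)) = 2^p for λ-almost all x. -/
import Mathlib


open MeasureTheory Set ENNReal

/-- The swap map `f_S` on `ℝ^p × ℝ^p`. -/
noncomputable def swapMap (p : ℕ) (S : Finset (Fin p)) :
    ((Fin p → ℝ) × (Fin p → ℝ)) → ((Fin p → ℝ) × (Fin p → ℝ)) :=
  fun z => (fun i => if i ∈ S then z.2 i else z.1 i,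
            fun i => if i ∈ S then z.1 i else z.2 i)

lemma swapMap_measurable (p : ℕ) (S : Finset (Fin p)) : Measurable (swapMap p S) := by
  unfold swapMap
  refine Measurable.prod ?_ ?_ <;>
    refine measurable_pi_lambda _ fun i => ?_ <;>
    by_cases h : i ∈ S <;>
    simp only [h, if_true, if_false] <;>
    exact (measurable_pi_apply i).comp (by measurability)

lemma swapMap_involutive (p : ℕ) (S : Finset (Fin p)) :
    Function.Involutive (swapMap p S) := by
  intro z
  unfold swapMap
  ext i <;> simp <;> split_ifs <;> rfl

lemma swapMap_empty (p : ℕ) : swapMap p ∅ = id := by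
  funext z
  simp [swapMap]

lemma withDensity_finset_sum {α : Type*} [MeasurableSpace α] (μ : Measure α)
    {ι : Type*} (s : Finset ι) (f : ι → α → ℝ≥0∞) (hf : ∀ i, Measurable (f i)) :
    μ.withDensity (fun x => ∑ i ∈ s, f i x) = ∑ i ∈ s, μ.withDensity (f i) := by
  classical
  induction s using Finset.induction with
  | empty => simp
  | @insert a s hnotmem ih =>
    rw [Finset.sum_insert hnotmem, ← ih]
    have : (fun x => ∑ i ∈ insert a s, f i x)
        = fun x => f a x + ∑ i ∈ s, f i x := by
      funext x; rw [Finset.sum_insert hnotmem]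
    rw [this]
    exact withDensity_add_left (hf a) _

/-- If `λ` is `F`-invariant and `λ = 2^{-p} ∑_{f ∈ F} π ∘ f⁻¹`, then `π ≪ λ` and the
density `q` of `π` w.r.t. `λ` satisfies `∑_{f ∈ F} q(f(x)) = 2^p` for `λ`-a.e. `x`. -/
theorem average_implies_density (p : ℕ) (hp : 2 ≤ p)
    (lam π : Measure ((Fin p → ℝ) × (Fin p → ℝ)))
    [IsProbabilityMeasure lam] [IsProbabilityMeasure π]
    (hinv : ∀ S : Finset (Fin p), lam.map (swapMap p S) = lam)
    (hrep : lam = ((2 : ℝ≥0∞) ^ p)⁻¹ • ∑ S : Finset (Fin p), π.map (swapMap p S)) :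
    π ≪ lam ∧
    ∃ q : ((Fin p → ℝ) × (Fin p → ℝ)) → ℝ≥0∞, Measurable q ∧
      π = lam.withDensity q ∧
      ∀ᵐ z ∂lam, ∑ S : Finset (Fin p), q (swapMap p S z) = (2 : ℝ≥0∞) ^ p := by
  have h2p_ne_top : (2 : ℝ≥0∞) ^ p ≠ ∞ := by
    exact ENNReal.pow_ne_top (by norm_num)
  have h2p_ne_zero : (2 : ℝ≥0∞) ^ p ≠ 0 := by positivity
  -- absolute continuity
  have hac : π ≪ lam := by
    intro A hA
    have := congrArg (fun μ : Measure _ => μ A) hrep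
    simp only [Measure.smul_apply, Measure.coe_finset_sum, Finset.sum_apply,
      smul_eq_mul, hA] at this
    have hsum : ∑ S : Finset (Fin p), (π.map (swapMap p S)) A = 0 := by
      by_contra h
      exact (ENNReal.inv_ne_zero.mpr h2p_ne_top) (by
        rcases mul_eq_zero.mp this.symm with h1 | h2
        · exact h1
        · exact absurd h2 h)
    have hterm : (π.map (swapMap p ∅)) A = 0 := by
      exact (Finset.sum_eq_zero_iff.mp hsum) ∅ (Finset.mem_univ _)
    rwa [swapMap_empty, Measure.map_id] at hterm
  refine ⟨hac, ?_⟩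
  set q := π.rnDeriv lam with hq
  have hqmeas : Measurable q := Measure.measurable_rnDeriv π lam
  have hπeq : π = lam.withDensity q := (Measure.withDensity_rnDeriv_eq π lam hac).symm
  refine ⟨q, hqmeas, hπeq, ?_⟩
  -- pushforward of withDensity under the measure-preserving involution
  have hmap : ∀ S : Finset (Fin p),
      π.map (swapMap p S) = lam.withDensity (fun z => q (swapMap p S z)) := by
    intro S
    ext A hA
    rw [Measure.map_apply (swapMap_measurable p S) hA, hπeq,
      withDensity_apply _ ((swapMap_measurable p S) hA),
      withDensity_apply _ hA]
    have h1 : ∫⁻ z in swapMap p S ⁻¹' A, q z ∂lam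
        = ∫⁻ z, (swapMap p S ⁻¹' A).indicator q z ∂lam := by
      rw [lintegral_indicator ((swapMap_measurable p S) hA)]
    have h2 : ∫⁻ z in A, q (swapMap p S z) ∂lam
        = ∫⁻ z, A.indicator (fun z => q (swapMap p S z)) z ∂lam := by
      rw [lintegral_indicator hA]
    rw [h1, h2]
    conv_lhs => rw [← hinv S]
    rw [lintegral_map (by
      exact (hqmeas.indicator ((swapMap_measurable p S) hA))) (swapMap_measurable p S)]
    congr 1
    funext z
    have hinvol : swapMap p S (swapMap p S z) = z := swapMap_involutive p S z
    by_cases hz : z ∈ A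
    · simp [Set.indicator, hz, hinvol]
    · simp [Set.indicator, hz, hinvol]
  -- rewrite representation
  have hrep2 : lam = lam.withDensity
      (fun z => ((2 : ℝ≥0∞) ^ p)⁻¹ * ∑ S : Finset (Fin p), q (swapMap p S z)) := by
    have hmeas_sum : Measurable fun z => ∑ S : Finset (Fin p), q (swapMap p S z) := by
      exact Finset.measurable_sum _ fun S _ => hqmeas.comp (swapMap_measurable p S)
    calc lam = ((2 : ℝ≥0∞) ^ p)⁻¹ • ∑ S : Finset (Fin p), π.map (swapMap p S) := hrep
      _ = ((2 : ℝ≥0∞) ^ p)⁻¹ •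
          ∑ S : Finset (Fin p), lam.withDensity (fun z => q (swapMap p S z)) := by
            simp_rw [hmap]
      _ = ((2 : ℝ≥0∞) ^ p)⁻¹ •
          lam.withDensity (fun z => ∑ S : Finset (Fin p), q (swapMap p S z)) := by
            rw [withDensity_finset_sum lam Finset.univ
              (fun S z => q (swapMap p S z))
              (fun S => hqmeas.comp (swapMap_measurable p S))]
      _ = lam.withDensity
          (fun z => ((2 : ℝ≥0∞) ^ p)⁻¹ * ∑ S : Finset (Fin p), q (swapMap p S z)) := by
            rw [← withDensity_smul _ hmeas_sum]; rfl
  have hmeas_h : Measurable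
      (fun z => ((2 : ℝ≥0∞) ^ p)⁻¹ * ∑ S : Finset (Fin p), q (swapMap p S z)) :=
    (Finset.measurable_sum _ fun S _ => hqmeas.comp (swapMap_measurable p S)).const_mul _
  have h1 := Measure.rnDeriv_withDensity lam hmeas_h
  rw [← hrep2] at h1
  have h2 := Measure.rnDeriv_self lam
  filter_upwards [h1, h2] with z hz1 hz2
  have : ((2 : ℝ≥0∞) ^ p)⁻¹ * ∑ S : Finset (Fin p), q (swapMap p S z) = 1 := by
    rw [← hz1, hz2]
  calc ∑ S : Finset (Fin p), q (swapMap p S z)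
      = (2 : ℝ≥0∞) ^ p * (((2 : ℝ≥0∞) ^ p)⁻¹ * ∑ S : Finset (Fin p), q (swapMap p S z)) := by
        rw [← mul_assoc, ENNReal.mul_inv_cancel h2p_ne_zero h2p_ne_top, one_mul]
    _ = (2 : ℝ≥0∞) ^ p := by rw [this, mul_one]
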